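/- For real c < -2, the inequality (ζ_c/(2(-ζ_c - c))) / (1 - ζ_c/(2(ζ_c - c))) < 1 holds if and only if c < -2 - √5, where ζ_c = (√(1-4c)+1)/2. -/

import Mathlib

/-- For real `c < -2`, the inequality
`(ζ_c/(2(-ζ_c - c))) / (1 - ζ_c/(2(ζ_c - c))) < 1` holds iff `c < -2 - √5`. -/
theorem stmt_7 (c : ℝ) (hc : c < -2) :
    (((Real.sqrt (1 - 4 * c) + 1) / 2) / (2 * (-((Real.sqrt (1 - 4 * c) + 1) / 2) - c))) /
        (1 - ((Real.sqrt (1 - 4 * c) + 1) / 2) / (2 * (((Real.sqrt (1 - 4 * c) + 1) / 2) - c))) < 1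
      ↔ c < -2 - Real.sqrt 5 := by
  set s := Real.sqrt (1 - 4 * c) with hsdef
  have hs0 : 0 ≤ 1 - 4 * c := by linarith
  have hsq : s ^ 2 = 1 - 4 * c := Real.sq_sqrt hs0
  have hsnn : 0 ≤ s := Real.sqrt_nonneg _
  have hs3 : 3 < s := by nlinarith
  have hc_eq : c = (1 - s ^ 2) / 4 := by linarith
  set t := Real.sqrt 5 with htdef
  have htq : t ^ 2 = 5 := Real.sq_sqrt (by norm_num)
  have htnn : 0 ≤ t := Real.sqrt_nonneg _
  have hne1 : s - 3 ≠ 0 := by linarith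
  have hne2 : s ≠ 0 := by linarith
  have hne3 : s + 1 ≠ 0 := by linarith
  have key : (((s + 1) / 2) / (2 * (-((s + 1) / 2) - c))) /
        (1 - ((s + 1) / 2) / (2 * (((s + 1) / 2) - c))) = (s + 1) / (s * (s - 3)) := by
    rw [hc_eq]
    have h4 : 2 * (-((s + 1) / 2) - (1 - s ^ 2) / 4) = (s - 3) * (s + 1) / 2 := by ring
    have h5 : 2 * ((s + 1) / 2 - (1 - s ^ 2) / 4) = (s + 1) ^ 2 / 2 := by ring
    rw [h4, h5]
    have e1 : ((s + 1) / 2) / ((s - 3) * (s + 1) / 2) = 1 / (s - 3) := by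
      field_simp
    have e2 : ((s + 1) / 2) / ((s + 1) ^ 2 / 2) = 1 / (s + 1) := by
      rw [div_div_div_comm]
      field_simp
    have e3 : 1 - 1 / (s + 1) = s / (s + 1) := by
      field_simp
      ring
    rw [e1, e2, e3, div_div_div_eq]
    rw [div_eq_div_iff (by positivity) (by nlinarith)]
    ring
  rw [key]
  have hden : 0 < s * (s - 3) := by nlinarith
  rw [div_lt_one hden]
  constructor
  · intro h
    have h1 : t ^ 2 < (s - 2) ^ 2 := by nlinarith
    have h2 : t < s - 2 := lt_of_pow_lt_pow_left₀ 2 (by linarith) h1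
    nlinarith
  · intro h
    have h1 : (2 + t) ^ 2 < s ^ 2 := by nlinarith
    have h2 : 2 + t < s := lt_of_pow_lt_pow_left₀ 2 hsnn h1
    nlinarith
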